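/- For real β ≥ 0, the spectral radii of the bounded operators L↓_β and L↑_β on H^∞(Π) are both equal to 1: r(L↓_β) = r(L↑_β) = 1. -/

import Mathlib

set_option maxHeartbeats 1000000
set_option synthInstance.maxHeartbeats 400000


open Complex BoundedContinuousFunction
open scoped ENNReal

/-- The open right half-plane `Π = {z : ℂ | 0 < Re z}`. -/
def RHP : Set ℂ := {z : ℂ | 0 < z.re}

/-- Extension of a bounded continuous function on `Π` to `ℂ` (by zero off `Π`). -/
noncomputable def extFun (f : ↥RHP →ᵇ ℂ) : ℂ → ℂ :=
  fun z => if h : 0 < z.re then f ⟨z, h⟩ else 0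

/-- `H^∞(Π)`: the space of bounded holomorphic functions on `Π`, realised as the
submodule of the Banach space of bounded continuous functions on `Π` (with the
supremum norm) consisting of the holomorphic ones. -/
noncomputable def Hinf : Submodule ℂ (↥RHP →ᵇ ℂ) where
  carrier := {f | DifferentiableOn ℂ (extFun f) RHP}
  add_mem' := by
    intro f g hf hg
    refine (DifferentiableOn.add hf hg).congr (fun z hz => ?_)
    have hz' : 0 < z.re := hz
    simp only [extFun]
    simp [extFun, hz']
  zero_mem' := by
    refine (differentiableOn_const 0).congr (fun z hz => ?_)
    have hz' : 0 < z.re := hz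
    simp only [extFun]
    rw [dif_pos hz']
    rfl
  smul_mem' := by
    intro c f hf
    refine (hf.const_smul c).congr (fun z hz => ?_)
    have hz' : 0 < z.re := hz
    simp only [extFun]
    simp [extFun, hz']

lemma mem_shift (z : ↥RHP) : (1 : ℂ) + z.1 ∈ RHP := by
  have hz := z.2
  simp only [RHP, Set.mem_setOf_eq, Complex.add_re, Complex.one_re] at *
  linarith

lemma mem_div (z : ↥RHP) : z.1 / (1 + z.1) ∈ RHP := by
  have hz := z.2
  simp only [RHP, Set.mem_setOf_eq] at hz ⊢
  have hw : (1 + z.1) ≠ 0 := by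
    intro h
    have h2 : (1 + z.1).re = 0 := by rw [h]; simp
    simp only [Complex.add_re, Complex.one_re] at h2
    linarith
  have hns : 0 < Complex.normSq (1 + z.1) := Complex.normSq_pos.mpr hw
  rw [Complex.div_re]
  have h1 : 0 < z.1.re * (1 + z.1).re := by
    simp only [Complex.add_re, Complex.one_re]
    nlinarith
  have h2 : 0 ≤ z.1.im * (1 + z.1).im := by
    simp only [Complex.add_im, Complex.one_im, zero_add]
    nlinarith [sq_nonneg z.1.im]
  have := div_pos h1 hns
  have := div_nonneg h2 hns.le
  linarith

/-- Pointwise characterisation of the transfer operator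
`(L↑_β f)(z) = (1+z)^(-2β) f(z/(1+z))` on `H^∞(Π)` (principal branch power). -/
def IsLup (β : ℂ) (T : ↥Hinf →L[ℂ] ↥Hinf) : Prop :=
  ∀ f : ↥Hinf, ∀ z : ↥RHP,
    (T f).1 z = (1 + z.1) ^ (-(2 * β)) * f.1 ⟨z.1 / (1 + z.1), mem_div z⟩

/-- Pointwise characterisation of the transfer operator `(L↓ f)(z) = f(1+z)` on `H^∞(Π)`. -/
def IsLdn (T : ↥Hinf →L[ℂ] ↥Hinf) : Prop :=
  ∀ f : ↥Hinf, ∀ z : ↥RHP, (T f).1 z = f.1 ⟨1 + z.1, mem_shift z⟩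


/-! ### Auxiliary material -/

lemma isOpen_RHP : IsOpen RHP := isOpen_lt continuous_const Complex.continuous_re

lemma isClosed_Hinf : IsClosed (Hinf : Set (↥RHP →ᵇ ℂ)) := by
  have : (Hinf : Set (↥RHP →ᵇ ℂ)) = {f : ↥RHP →ᵇ ℂ | DifferentiableOn ℂ (extFun f) RHP} := rfl
  rw [this]
  apply IsSeqClosed.isClosed
  intro F f hF hlim
  have hUnif : TendstoUniformlyOn (fun k z => extFun (F k) z) (extFun f) Filter.atTop RHP := by
    rw [Metric.tendstoUniformlyOn_iff]
    intro ε hε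
    obtain ⟨K, hK⟩ := (Metric.tendsto_atTop.mp hlim) ε hε
    refine Filter.eventually_atTop.mpr ⟨K, fun n hn x hx => ?_⟩
    have hx' : 0 < x.re := hx
    simp only [extFun, dif_pos hx']
    calc dist (f ⟨x, hx'⟩) ((F n) ⟨x, hx'⟩) ≤ dist f (F n) :=
          BoundedContinuousFunction.dist_coe_le_dist _
      _ < ε := by rw [dist_comm]; exact hK n hn
  exact (hUnif.tendstoLocallyUniformlyOn).differentiableOn
    (Filter.Eventually.of_forall hF) isOpen_RHP

instance : CompleteSpace ↥Hinf := isClosed_Hinf.completeSpace_coe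

instance : Nonempty ↥RHP := ⟨⟨1, by simp [RHP]⟩⟩

/-- The constant function `1` as an element of `H^∞(Π)`. -/
noncomputable def oneH : ↥Hinf :=
  ⟨BoundedContinuousFunction.const ↥RHP (1:ℂ), by
    show DifferentiableOn ℂ (extFun _) RHP
    refine (differentiableOn_const (1:ℂ)).congr (fun z hz => ?_)
    have hz' : 0 < z.re := hz
    simp only [extFun]
    rw [dif_pos hz']
    rfl⟩

lemma oneH_apply (z : ↥RHP) : (oneH.1 : ↥RHP →ᵇ ℂ) z = 1 := rfl

lemma norm_oneH : ‖oneH‖ = 1 := by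
  show ‖(BoundedContinuousFunction.const ↥RHP (1:ℂ))‖ = 1
  rw [BoundedContinuousFunction.norm_const_eq]
  simp

lemma oneH_ne_zero : oneH ≠ 0 := by
  intro h
  have := norm_oneH
  rw [h, norm_zero] at this
  norm_num at this

instance : Nontrivial ↥Hinf := ⟨oneH, 0, oneH_ne_zero⟩

lemma norm_apply_le (f : ↥Hinf) (z : ↥RHP) : ‖(f.1 : ↥RHP →ᵇ ℂ) z‖ ≤ ‖f‖ :=
  (f.1).norm_coe_le_norm z

lemma Hinf_norm_le (f : ↥Hinf) {C : ℝ} (hC : 0 ≤ C)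
    (h : ∀ z : ↥RHP, ‖(f.1 : ↥RHP →ᵇ ℂ) z‖ ≤ C) : ‖f‖ ≤ C := by
  show ‖(f.1 : ↥RHP →ᵇ ℂ)‖ ≤ C
  exact (BoundedContinuousFunction.norm_le hC).mpr h

lemma one_le_spectralRadius_of_mem {a : ↥Hinf →L[ℂ] ↥Hinf}
    (h : (1:ℂ) ∈ spectrum ℂ a) : 1 ≤ spectralRadius ℂ a := by
  have h2 := le_iSup₂ (f := fun k (_ : k ∈ spectrum ℂ a) => (‖k‖₊ : ℝ≥0∞)) (1:ℂ) h
  simpa [spectralRadius] using h2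

lemma aux_spectralRadius_le_one {E : Type*} [NormedAddCommGroup E] [NormedSpace ℂ E]
    [Nontrivial E] [CompleteSpace E] {a : E →L[ℂ] E} (h : ‖a‖ ≤ 1) :
    spectralRadius ℂ a ≤ 1 := by
  have h1 : spectralRadius ℂ a ≤ (‖a‖₊ : ℝ≥0∞) := spectrum.spectralRadius_le_nnnorm a
  refine h1.trans ?_
  rw [← ENNReal.coe_one]
  exact ENNReal.coe_le_coe.mpr (by exact_mod_cast h)

lemma spectralRadius_le_one_of_norm {a : ↥Hinf →L[ℂ] ↥Hinf}
    (h : ‖a‖ ≤ 1) : spectralRadius ℂ a ≤ 1 :=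
  aux_spectralRadius_le_one h

lemma neg_two_beta_cast (β : ℝ) : -(2 * (β:ℂ)) = ((-(2*β) : ℝ) : ℂ) := by
  push_cast; ring

lemma abs_factor_le {β : ℝ} (hβ : 0 ≤ β) (z : ↥RHP) :
    ‖(1 + z.1) ^ (-(2 * (β:ℂ)))‖ ≤ 1 := by
  rw [neg_two_beta_cast, Complex.norm_cpow_real]
  have hz : 0 < z.1.re := z.2
  have h1 : 1 ≤ ‖1 + z.1‖ := by
    calc (1:ℝ) ≤ (1 + z.1).re := by
          simp only [Complex.add_re, Complex.one_re]; linarith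
    _ ≤ ‖1 + z.1‖ := Complex.re_le_norm _
  exact Real.rpow_le_one_of_one_le_of_nonpos h1 (by linarith)

lemma norm_Ldn_le {T : ↥Hinf →L[ℂ] ↥Hinf} (hdn : IsLdn T) : ‖T‖ ≤ 1 := by
  refine ContinuousLinearMap.opNorm_le_bound _ zero_le_one fun f => ?_
  rw [one_mul]
  refine Hinf_norm_le _ (norm_nonneg f) fun z => ?_
  rw [hdn f z]
  exact norm_apply_le f _

lemma norm_Lup_le {β : ℝ} (hβ : 0 ≤ β) {T : ↥Hinf →L[ℂ] ↥Hinf}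
    (hup : IsLup (β:ℂ) T) : ‖T‖ ≤ 1 := by
  refine ContinuousLinearMap.opNorm_le_bound _ zero_le_one fun f => ?_
  rw [one_mul]
  refine Hinf_norm_le _ (norm_nonneg f) fun z => ?_
  rw [hup f z]
  rw [norm_mul]
  calc ‖(1 + z.1) ^ (-(2 * (β:ℂ)))‖ * ‖(f.1 : ↥RHP →ᵇ ℂ) ⟨z.1 / (1 + z.1), mem_div z⟩‖
      ≤ 1 * ‖f‖ := by
        apply mul_le_mul (abs_factor_le hβ z) (norm_apply_le f _) (norm_nonneg _) zero_le_one
    _ = ‖f‖ := one_mul _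

lemma mem_RHP_ofReal {x : ℝ} (hx : 0 < x) : ((x:ℂ)) ∈ RHP := by
  simpa [RHP] using hx

lemma Lup_pow_succ (T : ↥Hinf →L[ℂ] ↥Hinf) (n : ℕ) (f : ↥Hinf) :
    (T ^ (n+1)) f = T ((T ^ n) f) := by
  rw [pow_succ', ContinuousLinearMap.mul_apply]

lemma Lup_pow_oneH_real {β : ℝ} {T : ↥Hinf →L[ℂ] ↥Hinf} (hup : IsLup (β:ℂ) T) :
    ∀ (n : ℕ) (x : ℝ) (hx : 0 < x),
      (((T ^ n) oneH).1 : ↥RHP →ᵇ ℂ) ⟨(x:ℂ), mem_RHP_ofReal hx⟩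
        = (((1 + n*x) ^ (-(2*β)) : ℝ) : ℂ) := by
  intro n
  induction n with
  | zero =>
    intro x hx
    rw [pow_zero, ContinuousLinearMap.one_apply, oneH_apply]
    norm_num
  | succ n ih =>
    intro x hx
    have hx1 : (0:ℝ) < 1 + x := by linarith
    have hx' : 0 < x / (1 + x) := div_pos hx hx1
    rw [Lup_pow_succ, hup]
    have hpt : (⟨(x:ℂ) / (1 + (x:ℂ)), mem_div ⟨(x:ℂ), mem_RHP_ofReal hx⟩⟩ : ↥RHP)
        = ⟨((x / (1+x) : ℝ) : ℂ), mem_RHP_ofReal hx'⟩ := by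
      apply Subtype.ext
      push_cast
      ring
    rw [hpt, ih _ hx']
    have hfac : (1 + (x:ℂ)) ^ (-(2 * (β:ℂ))) = (((1+x) ^ (-(2*β)) : ℝ) : ℂ) := by
      rw [neg_two_beta_cast, Complex.ofReal_cpow hx1.le]
      norm_num
    rw [hfac, ← Complex.ofReal_mul]
    congr 1
    have hb : (0:ℝ) < 1 + n * (x / (1+x)) := by positivity
    rw [← Real.mul_rpow hx1.le hb.le]
    congr 1
    field_simp
    push_cast
    ring

lemma norm_Lup_pow_oneH_le {β : ℝ} (hβ : 0 ≤ β) {T : ↥Hinf →L[ℂ] ↥Hinf}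
    (hup : IsLup (β:ℂ) T) (n : ℕ) : ‖(T ^ n) oneH‖ ≤ 1 := by
  induction n with
  | zero => rw [pow_zero, ContinuousLinearMap.one_apply, norm_oneH]
  | succ n ih =>
    rw [Lup_pow_succ]
    calc ‖T ((T ^ n) oneH)‖ ≤ ‖T‖ * ‖(T ^ n) oneH‖ := T.le_opNorm _
      _ ≤ 1 * 1 := by
          apply mul_le_mul (norm_Lup_le hβ hup) ih (norm_nonneg _) zero_le_one
      _ = 1 := one_mul _

lemma one_mem_spectrum_Ldn {T : ↥Hinf →L[ℂ] ↥Hinf} (hdn : IsLdn T) :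
    (1:ℂ) ∈ spectrum ℂ T := by
  rw [spectrum.mem_iff, map_one]
  intro hunit
  obtain ⟨u, hu⟩ := hunit
  have hfix : T oneH = oneH := by
    apply Subtype.ext
    apply BoundedContinuousFunction.ext
    intro z
    rw [hdn oneH z]
    rfl
  have h0 : (↑u : ↥Hinf →L[ℂ] ↥Hinf) oneH = 0 := by
    rw [hu, ContinuousLinearMap.sub_apply, ContinuousLinearMap.one_apply, hfix, sub_self]
  have : oneH = 0 := by
    calc oneH = ((↑u⁻¹ * ↑u : ↥Hinf →L[ℂ] ↥Hinf)) oneH := by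
          rw [u.inv_mul, ContinuousLinearMap.one_apply]
      _ = (↑u⁻¹ : ↥Hinf →L[ℂ] ↥Hinf) ((↑u : ↥Hinf →L[ℂ] ↥Hinf) oneH) :=
          ContinuousLinearMap.mul_apply _ _ _
      _ = 0 := by rw [h0, map_zero]
  exact oneH_ne_zero this

lemma one_mem_spectrum_Lup {β : ℝ} (hβ : 0 ≤ β) {T : ↥Hinf →L[ℂ] ↥Hinf}
    (hup : IsLup (β:ℂ) T) : (1:ℂ) ∈ spectrum ℂ T := by
  rw [spectrum.mem_iff, map_one]
  intro hunit
  obtain ⟨u, hu⟩ := hunit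
  obtain ⟨N, hN⟩ := exists_nat_gt (‖(↑u⁻¹ : ↥Hinf →L[ℂ] ↥Hinf)‖ * 2)
  set g : ℕ → ↥Hinf := fun n => (T ^ n) oneH with hg
  set S : ↥Hinf := ∑ n ∈ Finset.range N, g n with hSdef
  -- telescoping identity
  have hTS : ((1 : ↥Hinf →L[ℂ] ↥Hinf) - T) S = g 0 - g N := by
    rw [ContinuousLinearMap.sub_apply, ContinuousLinearMap.one_apply, hSdef, map_sum,
      ← Finset.sum_sub_distrib]
    have : ∀ n ∈ Finset.range N, g n - T (g n) = g n - g (n+1) := by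
      intro n _
      rw [hg]
      simp only
      rw [Lup_pow_succ]
    rw [Finset.sum_congr rfl this, Finset.sum_range_sub']
  have h2 : ‖((1 : ↥Hinf →L[ℂ] ↥Hinf) - T) S‖ ≤ 2 := by
    rw [hTS]
    calc ‖g 0 - g N‖ ≤ ‖g 0‖ + ‖g N‖ := norm_sub_le _ _
      _ ≤ 1 + 1 := add_le_add (norm_Lup_pow_oneH_le hβ hup 0) (norm_Lup_pow_oneH_le hβ hup N)
      _ = 2 := by norm_num
  have hS : ‖S‖ ≤ ‖(↑u⁻¹ : ↥Hinf →L[ℂ] ↥Hinf)‖ * 2 := by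
    have hSeq : S = (↑u⁻¹ : ↥Hinf →L[ℂ] ↥Hinf) (((1 : ↥Hinf →L[ℂ] ↥Hinf) - T) S) := by
      calc S = ((↑u⁻¹ * ↑u : ↥Hinf →L[ℂ] ↥Hinf)) S := by
            rw [u.inv_mul, ContinuousLinearMap.one_apply]
        _ = (↑u⁻¹ : ↥Hinf →L[ℂ] ↥Hinf) ((↑u : ↥Hinf →L[ℂ] ↥Hinf) S) :=
            ContinuousLinearMap.mul_apply _ _ _
        _ = _ := by rw [hu]
    calc ‖S‖ = ‖(↑u⁻¹ : ↥Hinf →L[ℂ] ↥Hinf) (((1 : ↥Hinf →L[ℂ] ↥Hinf) - T) S)‖ := by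
          rw [← hSeq]
      _ ≤ ‖(↑u⁻¹ : ↥Hinf →L[ℂ] ↥Hinf)‖ * ‖((1 : ↥Hinf →L[ℂ] ↥Hinf) - T) S‖ :=
          ContinuousLinearMap.le_opNorm _ _
      _ ≤ ‖(↑u⁻¹ : ↥Hinf →L[ℂ] ↥Hinf)‖ * 2 :=
          mul_le_mul_of_nonneg_left h2 (ContinuousLinearMap.opNorm_nonneg _)
  -- lower bound : N ≤ ‖S‖
  have hval : ∀ (x : ℝ) (hx : 0 < x),
      ((S.1 : ↥RHP →ᵇ ℂ)) ⟨(x:ℂ), mem_RHP_ofReal hx⟩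
        = ((∑ n ∈ Finset.range N, (1 + n*x) ^ (-(2*β)) : ℝ) : ℂ) := by
    intro x hx
    have hcoe : (S.1 : ↥RHP →ᵇ ℂ) = ∑ n ∈ Finset.range N, ((g n).1 : ↥RHP →ᵇ ℂ) := by
      rw [hSdef]
      exact AddSubmonoidClass.coe_finset_sum g (Finset.range N)
    rw [hcoe, BoundedContinuousFunction.coe_sum, Finset.sum_apply]
    rw [Complex.ofReal_sum]
    apply Finset.sum_congr rfl
    intro n _
    exact Lup_pow_oneH_real hup n x hx
  have hlow : (N:ℝ) ≤ ‖S‖ := by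
    have hcont : ContinuousAt (fun x : ℝ => (N:ℝ) * (1 + N*x) ^ (-(2*β))) 0 := by
      apply ContinuousAt.mul continuousAt_const
      have h0 : ContinuousAt (fun x : ℝ => 1 + N*x) 0 := by fun_prop
      have h1 := h0.rpow_const (p := -(2*β)) (Or.inl (by norm_num))
      exact h1
    have hlim : Filter.Tendsto (fun x : ℝ => (N:ℝ) * (1 + N*x) ^ (-(2*β)))
        (nhdsWithin 0 (Set.Ioi 0)) (nhds (N:ℝ)) := by
      have h2 := hcont.tendsto.mono_left (nhdsWithin_le_nhds (s := Set.Ioi (0:ℝ)))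
      simpa using h2
    refine le_of_tendsto hlim ?_
    filter_upwards [self_mem_nhdsWithin] with x hx
    have hx : (0:ℝ) < x := hx
    have hterm : ∀ n ∈ Finset.range N, (1 + N*x) ^ (-(2*β)) ≤ (1 + n*x) ^ (-(2*β)) := by
      intro n hn
      have hn' : (n:ℝ) ≤ N := by
        exact_mod_cast (Finset.mem_range.mp hn).le
      apply Real.rpow_le_rpow_of_nonpos (by positivity)
      · nlinarith
      · linarith
    have hsum : (N:ℝ) * (1 + N*x) ^ (-(2*β))
        ≤ ∑ n ∈ Finset.range N, (1 + n*x) ^ (-(2*β)) := by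
      have := Finset.card_nsmul_le_sum (Finset.range N)
        (fun n => (1 + n*x) ^ (-(2*β))) ((1 + N*x) ^ (-(2*β))) hterm
      simpa [nsmul_eq_mul] using this
    calc (N:ℝ) * (1 + N*x) ^ (-(2*β))
        ≤ ∑ n ∈ Finset.range N, (1 + n*x) ^ (-(2*β)) := hsum
      _ ≤ ‖(S.1 : ↥RHP →ᵇ ℂ) ⟨(x:ℂ), mem_RHP_ofReal hx⟩‖ := by
          rw [hval x hx, Complex.norm_real, Real.norm_eq_abs]
          exact le_abs_self _
      _ ≤ ‖S‖ := norm_apply_le S _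
  linarith

/-- (Corollary): for real `β ≥ 0` the spectral radii of `L↓_β` and `L↑_β`
on `H^∞(Π)` are both equal to `1`. -/
theorem spectral_radii_eq_one (β : ℝ) (hβ : 0 ≤ β)
    (Lup Ldn : ↥Hinf →L[ℂ] ↥Hinf) (hup : IsLup (β : ℂ) Lup) (hdn : IsLdn Ldn) :
    spectralRadius ℂ Ldn = 1 ∧ spectralRadius ℂ Lup = 1 := by
  constructor
  · refine le_antisymm (spectralRadius_le_one_of_norm (norm_Ldn_le hdn)) ?_
    exact one_le_spectralRadius_of_mem (one_mem_spectrum_Ldn hdn)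
  · refine le_antisymm (spectralRadius_le_one_of_norm (norm_Lup_le hβ hup)) ?_
    exact one_le_spectralRadius_of_mem (one_mem_spectrum_Lup hβ hup)
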